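/- arXiv:2511.02436 — 8 statements merged into one kernel-verified Lean document; each statement's English description precedes it below -/
import Mathlib

section
/- Assume w - c ≥ x_δ. Then γ := (1-δ)·r / (δ·(w+r)·(p-q) - δ·(1-q)·r) satisfies 0 < γ ≤ 1; the value W_N := w - c is the unique real solution of the equation W_N = (1-δ)·w + δ·(p + (1-p)·(1-γ))·W_N; and the worker's effort incentive constraint binds at this value: δ·γ·(p-q)·(w-c) = (1-δ)·r. -/
/-- grim-trigger construction attaining the worker's highest PPE payoff
in the no-mediation benchmark. -/
theorem stmt0 (δ p q w r c xδ γ : ℝ)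
    (hδ0 : 0 < δ) (hδ1 : δ < 1)
    (hq0 : 0 < q) (hqp : q < p) (hp1 : p < 1)
    (hw : 0 < w) (hr : 0 < r)
    (hc : c = (1 - p) * r / (p - q))
    (hx : xδ = (1 - δ) * r / (δ * (p - q)))
    (hwc : w - c ≥ xδ)
    (hγ : γ = (1 - δ) * r / (δ * (w + r) * (p - q) - δ * (1 - q) * r)) :
    (0 < γ ∧ γ ≤ 1) ∧
    (w - c = (1 - δ) * w + δ * (p + (1 - p) * (1 - γ)) * (w - c)) ∧
    (∀ W : ℝ, W = (1 - δ) * w + δ * (p + (1 - p) * (1 - γ)) * W → W = w - c) ∧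
    δ * γ * (p - q) * (w - c) = (1 - δ) * r := by
  have hpq : 0 < p - q := sub_pos.2 hqp
  have hp : 0 < 1 - p := sub_pos.2 hp1
  have hδ : 0 < 1 - δ := sub_pos.2 hδ1
  have hx0 : 0 < xδ := by rw [hx]; positivity
  have hwc0 : 0 < w - c := lt_of_lt_of_le hx0 hwc
  have hcden : (p - q) * c = (1 - p) * r := by
    rw [hc]; field_simp
  have hD : δ * (w + r) * (p - q) - δ * (1 - q) * r = δ * (p - q) * (w - c) := by
    linear_combination δ * hcden
  have hDpos : 0 < δ * (p - q) * (w - c) := by positivity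
  have hγ' : γ = (1 - δ) * r / (δ * (p - q) * (w - c)) := by rw [hγ, hD]
  have hγpos : 0 < γ := by rw [hγ']; positivity
  have hIC : δ * γ * (p - q) * (w - c) = (1 - δ) * r := by
    rw [hγ']; field_simp
  have hγle : γ ≤ 1 := by
    rw [hγ']
    rw [div_le_one hDpos]
    have hle : (1 - δ) * r / (δ * (p - q)) ≤ w - c := le_trans (le_of_eq hx.symm) hwc
    rw [div_le_iff₀ (by positivity)] at hle
    nlinarith
  have hkey : (p - q) * (δ * (1 - p) * γ * (w - c)) = (p - q) * ((1 - δ) * c) := by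
    linear_combination (1 - p) * hIC - (1 - δ) * hcden
  have hkey' : δ * (1 - p) * γ * (w - c) = (1 - δ) * c :=
    mul_left_cancel₀ hpq.ne' hkey
  have hrec : w - c = (1 - δ) * w + δ * (p + (1 - p) * (1 - γ)) * (w - c) := by
    linear_combination hkey'
  refine ⟨⟨hγpos, hγle⟩, hrec, ?_, hIC⟩
  intro W hW
  have hzero : (W - (w - c)) * ((1 - δ) + δ * (1 - p) * γ) = 0 := by
    linear_combination hW - hrec
  have hcoef : (1 - δ) + δ * (1 - p) * γ > 0 := by positivity
  have := mul_eq_zero.1 hzero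
  rcases this with h | h
  · linarith [sub_eq_zero.1 h]
  · linarith
end

section
/- Suppose U, U_g, U_b ∈ ℝ satisfy 0 ≤ U_b, 0 ≤ U_g, U_g ≤ U, U_b ≤ U, U_g - U_b ≥ x_δ, and U = (1-δ)·w + δ·(p·U_g + (1-p)·U_b). Then U ≤ w - c and w - c ≥ x_δ. (Consequently, the worker's highest perfect public equilibrium payoff is at most max(0, w-c), and it is positive only if w - c ≥ x_δ.) -/
/-- bound on the worker's PPE continuation payoff at a history
where he is accepted and exerts effort. -/
theorem stmt1 (δ p q w r c xδ U Ug Ub : ℝ)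
    (hδ0 : 0 < δ) (hδ1 : δ < 1)
    (hq0 : 0 < q) (hqp : q < p) (hp1 : p < 1)
    (hw : 0 < w) (hr : 0 < r)
    (hc : c = (1 - p) * r / (p - q))
    (hx : xδ = (1 - δ) * r / (δ * (p - q)))
    (hUb0 : 0 ≤ Ub) (hUg0 : 0 ≤ Ug)
    (hUgU : Ug ≤ U) (hUbU : Ub ≤ U)
    (hIC : Ug - Ub ≥ xδ)
    (hPK : U = (1 - δ) * w + δ * (p * Ug + (1 - p) * Ub)) :
    U ≤ w - c ∧ w - c ≥ xδ := by
  have hpq : 0 < p - q := by linarith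
  have hp' : (0:ℝ) ≤ 1 - p := by linarith
  have hcq : c * (p - q) = (1 - p) * r := by
    rw [hc]; field_simp
  have hxq : xδ * (δ * (p - q)) = (1 - δ) * r := by
    rw [hx]; field_simp
  have h1 : p * Ug + (1 - p) * Ub ≤ U - (1 - p) * xδ := by
    have := mul_le_mul_of_nonneg_left hIC hp'
    nlinarith
  have h2 : (1 - δ) * U ≤ (1 - δ) * w - δ * ((1 - p) * xδ) := by
    have := mul_le_mul_of_nonneg_left h1 hδ0.le
    nlinarith
  have h4 : (1 - δ) * U * (p - q) ≤ (1 - δ) * w * (p - q) - (1 - δ) * (c * (p - q)) := by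
    have h3 : δ * ((1 - p) * xδ) * (p - q) = (1 - δ) * ((1 - p) * r) := by
      linear_combination (1 - p) * hxq
    have := mul_le_mul_of_nonneg_right h2 hpq.le
    nlinarith
  have hK : 0 < (1 - δ) * (p - q) := mul_pos (by linarith) hpq
  have h5 : (1 - δ) * (p - q) * (w - c - U) ≥ 0 := by rw [hcq] at h4; nlinarith
  have hmain : U ≤ w - c := by
    by_contra h
    nlinarith [mul_pos hK (show 0 < U - (w - c) by linarith)]
  refine ⟨hmain, ?_⟩
  have : xδ ≤ U := by linarith
  linarith
end

section
/- For every real U, the maximum over α ∈ [α_bar, 1] of α·((1-δ)·w + δ·(p·U + (1-p)·(U - x_δ))) + (1-α)·((1-δ)·(w+r) + δ·U) equals (1-δ)·U_bar + δ·U, and this maximum is attained uniquely at α = α_bar. Consequently, U_bar = α_bar·(w-c) + (1-α_bar)·(w+r) is the unique real fixed point of the map U ↦ max over α ∈ [α_bar, 1] of α·((1-δ)·w + δ·(p·U + (1-p)·(U - x_δ))) + (1-α)·((1-δ)·(w+r) + δ·U). -/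
/-- the maximization defining the worker's highest PCE utility, and
its unique fixed point U_bar. -/
theorem stmt4 (δ p q w r g b vlo vhi c xδ αbar Ubar : ℝ)
    (hδ0 : 0 < δ) (hδ1 : δ < 1)
    (hq0 : 0 < q) (hqp : q < p) (hp1 : p < 1)
    (hw : 0 < w) (hr : 0 < r)
    (hvlo : vlo = q * g + (1 - q) * b)
    (hvhi : vhi = p * g + (1 - p) * b)
    (hvlo0 : vlo < 0) (hvhi0 : 0 < vhi)
    (hc : c = (1 - p) * r / (p - q))
    (hx : xδ = (1 - δ) * r / (δ * (p - q)))
    (hαbar : αbar = -vlo / (vhi - vlo))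
    (hUbar : Ubar = αbar * (w - c) + (1 - αbar) * (w + r))
    (U : ℝ) :
    (∀ α ∈ Set.Icc αbar 1,
        α * ((1 - δ) * w + δ * (p * U + (1 - p) * (U - xδ)))
          + (1 - α) * ((1 - δ) * (w + r) + δ * U) ≤ (1 - δ) * Ubar + δ * U) ∧
    (αbar * ((1 - δ) * w + δ * (p * U + (1 - p) * (U - xδ)))
        + (1 - αbar) * ((1 - δ) * (w + r) + δ * U) = (1 - δ) * Ubar + δ * U) ∧
    (∀ α ∈ Set.Icc αbar 1,
        α * ((1 - δ) * w + δ * (p * U + (1 - p) * (U - xδ)))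
          + (1 - α) * ((1 - δ) * (w + r) + δ * U) = (1 - δ) * Ubar + δ * U →
        α = αbar) ∧
    ((1 - δ) * Ubar + δ * U = U ↔ U = Ubar) := by

  have hpq : 0 < p - q := by linarith
  have hc0 : 0 < c := by
    rw [hc]; exact div_pos (by nlinarith) hpq
  have key : δ * xδ * (1 - p) = (1 - δ) * c := by
    rw [hx, hc]; field_simp
  have hmain : ∀ α : ℝ,
      α * ((1 - δ) * w + δ * (p * U + (1 - p) * (U - xδ)))
        + (1 - α) * ((1 - δ) * (w + r) + δ * U)
      = (1 - δ) * Ubar + δ * U + (αbar - α) * ((1 - δ) * (r + c)) := by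
    intro α
    rw [hUbar]
    linear_combination (-α) * key
  have hpos : 0 < (1 - δ) * (r + c) := mul_pos (by linarith) (by linarith)
  refine ⟨?_, ?_, ?_, ?_⟩
  · intro α hα
    rw [hmain α]
    nlinarith [hα.1]
  · rw [hmain αbar]; ring
  · intro α hα heq
    rw [hmain α] at heq
    nlinarith [hα.1]
  · constructor
    · intro h; nlinarith
    · intro h; rw [h]; ring
end

section
/- Assume U_bar > 0 and δ > δ_bar. Then 0 < U^P, 0 < U^I < U^R < U_bar, U^P ≤ U^R, and U_bar - x_δ < U^R. -/
set_option maxHeartbeats 1600000 in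
/-- ordering of the threshold utilities U^P, U^I, U^R, U_bar. -/
theorem stmt6 (δ p q w r g b vlo vhi c xδ αbar Ubar δbar UP UR UI : ℝ)
    (hδ0 : 0 < δ) (hδ1 : δ < 1)
    (hq0 : 0 < q) (hqp : q < p) (hp1 : p < 1)
    (hw : 0 < w) (hr : 0 < r)
    (hvlo : vlo = q * g + (1 - q) * b)
    (hvhi : vhi = p * g + (1 - p) * b)
    (hvlo0 : vlo < 0) (hvhi0 : 0 < vhi)
    (hc : c = (1 - p) * r / (p - q))
    (hx : xδ = (1 - δ) * r / (δ * (p - q)))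
    (hαbar : αbar = -vlo / (vhi - vlo))
    (hUbar : Ubar = αbar * (w - c) + (1 - αbar) * (w + r))
    (hδbar : δbar = r / (r + (p - q) * Ubar))
    (hUP : UP = (1 - δ) * (w - c) + δ * xδ)
    (hUR : UR = (1 - δ) * (w - c) + δ * Ubar)
    (hUI : UI = if xδ ≤ w - c then w - c else UP)
    (hUbar0 : 0 < Ubar) (hδgt : δbar < δ) :
    0 < UP ∧ (0 < UI ∧ UI < UR ∧ UR < Ubar) ∧ UP ≤ UR ∧ Ubar - xδ < UR := by
  have hpq : 0 < p - q := by linarith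
  have hδpq : 0 < δ * (p - q) := mul_pos hδ0 hpq
  have hc0 : 0 < c := by
    rw [hc]; exact div_pos (mul_pos (by linarith) hr) hpq
  have hα0 : 0 < αbar := by
    rw [hαbar]; exact div_pos (by linarith) (by linarith)
  have hα1 : αbar < 1 := by
    rw [hαbar, div_lt_one (by linarith)]; linarith
  have hA : 0 < 1 - αbar := by linarith
  have hceq : c * (p - q) = (1 - p) * r := by
    rw [hc]; field_simp
  have hxeq : xδ * (δ * (p - q)) = (1 - δ) * r := by
    rw [hx]; field_simp
  have hx0 : 0 < xδ := by
    rw [hx]; exact div_pos (mul_pos (by linarith) hr) hδpq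
  have hwcU : w - c < Ubar := by
    rw [hUbar]; nlinarith [mul_pos hA (add_pos hr hc0)]
  -- xδ < Ubar from δbar < δ
  have hxU : xδ < Ubar := by
    have hd : 0 < r + (p - q) * Ubar := by positivity
    rw [hδbar, div_lt_iff₀ hd] at hδgt
    rw [hx, div_lt_iff₀ hδpq]
    nlinarith
  -- 0 < UP
  have hwcr : 0 < (w - c) * (p - q) + r := by
    nlinarith [mul_pos hw hpq, mul_pos (lt_trans hq0 hqp) hr]
  have hUPeq : UP * (p - q) = (1 - δ) * ((w - c) * (p - q) + r) := by
    rw [hUP]; linear_combination hxeq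
  have hUPpq : 0 < UP * (p - q) := by
    rw [hUPeq]; exact mul_pos (by linarith) hwcr
  have hUP0 : 0 < UP := by
    have h := div_pos hUPpq hpq
    rwa [mul_div_cancel_right₀ _ (ne_of_gt hpq)] at h
  have hmx : δ * xδ < δ * Ubar := mul_lt_mul_of_pos_left hxU hδ0
  have hmw : δ * (w - c) < δ * Ubar := mul_lt_mul_of_pos_left hwcU hδ0
  have e1 : (1 - δ) * (w - c) = (w - c) - δ * (w - c) := by ring
  have e2 : (1 - δ) * Ubar = Ubar - δ * Ubar := by ring
  have hmw2 : (1 - δ) * (w - c) < (1 - δ) * Ubar :=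
    mul_lt_mul_of_pos_left hwcU (by linarith)
  have hUPR : UP < UR := by rw [hUP, hUR]; linarith
  have hURU : UR < Ubar := by rw [hUR]; linarith
  have hwcUR : w - c < UR := by rw [hUR]; linarith
  -- final inequality
  have h1 : Ubar - (w - c) = (1 - αbar) * (r + c) := by rw [hUbar]; ring
  have h2 : (p - q) * (r + c) = (1 - q) * r := by linear_combination hceq
  have hX0 : 0 < (1 - αbar) * (1 - q) := mul_pos hA (by linarith)
  have hX1 : (1 - αbar) * (1 - q) < 1 * (1 - q) :=
    mul_lt_mul_of_pos_right (by linarith) (by linarith)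
  have hδt : δ * ((1 - αbar) * (1 - q)) < 1 := by
    have := mul_lt_mul_of_pos_right hδ1 hX0
    rw [one_mul] at this hX1
    linarith
  have s1 : (1 - δ) * ((1 - αbar) * (r + c)) * (δ * (p - q))
      = (δ * ((1 - αbar) * (1 - q))) * ((1 - δ) * r) := by
    linear_combination ((1 - δ) * δ * (1 - αbar)) * h2
  have s2 : (δ * ((1 - αbar) * (1 - q))) * ((1 - δ) * r) < 1 * ((1 - δ) * r) :=
    mul_lt_mul_of_pos_right hδt (mul_pos (by linarith) hr)
  have key : (1 - δ) * ((1 - αbar) * (r + c)) < xδ := by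
    rw [hx, lt_div_iff₀ hδpq]
    linarith [s1, s2]
  have h3 : (1 - δ) * (Ubar - (w - c)) < xδ := by rw [h1]; exact key
  have e3 : (1 - δ) * (Ubar - (w - c)) = Ubar - δ * Ubar - (1 - δ) * (w - c) := by
    ring
  have hfinal : Ubar - xδ < UR := by rw [hUR]; linarith
  refine ⟨hUP0, ⟨?_, ?_, hURU⟩, le_of_lt hUPR, hfinal⟩
  · rw [hUI]; split
    · linarith
    · exact hUP0
  · rw [hUI]; split
    · linarith
    · exact hUPR
end

section
/- Assume U_bar > 0 and δ ≥ δ_bar. (i) The only tuple (μ_e, μ_s, U_g, Û) feasible at U = 0 with μ_e = 0 forcing no constraint on U_g is: μ_e = 0, μ_s = 0, and Û = 0. (ii) The only tuple (μ_e, μ_s, U_g, Û) feasible at U = U_bar is (α_bar, 1 - α_bar, U_bar, U_bar). -/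
/-- A tuple (μe, μs, Ug, Uh) is feasible at promised utility U in the recursive
program characterizing the upper boundary of the PCE payoff set. -/
def Feasible (δ w r c xδ vhi vlo Ubar U μe μs Ug Uh : ℝ) : Prop :=
  0 ≤ μe ∧ 0 ≤ μs ∧ μe + μs ≤ 1 ∧
  xδ ≤ Ug ∧ Ug ≤ Ubar ∧ 0 ≤ Uh ∧ Uh ≤ Ubar ∧
  U = μe * ((1 - δ) * (w - c) + δ * Ug) + μs * ((1 - δ) * (w + r) + δ * Uh)
      + (1 - μe - μs) * δ * Uh ∧
  (0 < μe + μs → 0 ≤ μe * vhi + μs * vlo)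

set_option maxHeartbeats 2000000 in
/-- the unique feasible tuples at the extreme utilities 0 and U_bar. -/
theorem stmt7 (δ p q w r g b vlo vhi c xδ αbar Ubar δbar : ℝ)
    (hδ0 : 0 < δ) (hδ1 : δ < 1)
    (hq0 : 0 < q) (hqp : q < p) (hp1 : p < 1)
    (hw : 0 < w) (hr : 0 < r)
    (hvlo : vlo = q * g + (1 - q) * b)
    (hvhi : vhi = p * g + (1 - p) * b)
    (hvlo0 : vlo < 0) (hvhi0 : 0 < vhi)
    (hc : c = (1 - p) * r / (p - q))
    (hx : xδ = (1 - δ) * r / (δ * (p - q)))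
    (hαbar : αbar = -vlo / (vhi - vlo))
    (hUbar : Ubar = αbar * (w - c) + (1 - αbar) * (w + r))
    (hδbar : δbar = r / (r + (p - q) * Ubar))
    (hUbar0 : 0 < Ubar) (hδge : δbar ≤ δ) :
    ((∃ Ug, Feasible δ w r c xδ vhi vlo Ubar 0 0 0 Ug 0) ∧
      (∀ μe μs Ug Uh, Feasible δ w r c xδ vhi vlo Ubar 0 μe μs Ug Uh →
        μe = 0 ∧ μs = 0 ∧ Uh = 0)) ∧
    (Feasible δ w r c xδ vhi vlo Ubar Ubar αbar (1 - αbar) Ubar Ubar ∧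
      (∀ μe μs Ug Uh, Feasible δ w r c xδ vhi vlo Ubar Ubar μe μs Ug Uh →
        μe = αbar ∧ μs = 1 - αbar ∧ Ug = Ubar ∧ Uh = Ubar)) := by
  have hpq : 0 < p - q := by linarith
  have hvd : 0 < vhi - vlo := by linarith
  have hα0 : 0 < αbar := by
    rw [hαbar]; exact div_pos (by linarith) hvd
  have hα1 : αbar < 1 := by
    rw [hαbar, div_lt_one hvd]; linarith
  have hαv : αbar * (vhi - vlo) = -vlo := by
    rw [hαbar]; field_simp
  have hc' : c * (p - q) = (1 - p) * r := by
    rw [hc]; field_simp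
  have hx' : xδ * (δ * (p - q)) = (1 - δ) * r := by
    rw [hx]; field_simp
  have hcr : 0 < c + r := by nlinarith
  have hD : 0 < r + (p - q) * Ubar := by positivity
  have hrδ : r ≤ δ * (r + (p - q) * Ubar) := by
    rw [hδbar] at hδge
    have := (div_le_iff₀ hD).mp hδge
    linarith
  have hxU : xδ ≤ Ubar := by
    have h1 : xδ * (δ * (p - q)) ≤ Ubar * (δ * (p - q)) := by nlinarith
    have h2 : 0 < δ * (p - q) := mul_pos hδ0 hpq
    exact le_of_mul_le_mul_right h1 h2
  have hIC0 : αbar * vhi + (1 - αbar) * vlo = 0 := by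
    have hne : vhi - vlo ≠ 0 := ne_of_gt hvd
    rw [hαbar]; field_simp; ring
  -- positivity of the "effort" payoff given Ug ≥ xδ, and of the "shirk" payoff
  have hA : ∀ Ug : ℝ, xδ ≤ Ug → 0 < (1 - δ) * (w - c) + δ * Ug := by
    intro Ug h4
    have h5 : xδ * (δ * (p - q)) ≤ Ug * (δ * (p - q)) :=
      mul_le_mul_of_nonneg_right h4 (mul_pos hδ0 hpq).le
    nlinarith [mul_pos (mul_pos (show (0:ℝ) < 1 - δ by linarith) hw) hpq,
      mul_pos (mul_pos (show (0:ℝ) < 1 - δ by linarith) hr) (show (0:ℝ) < p by linarith)]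
  have hUv : (vhi - vlo) * Ubar = (vhi - vlo) * (w - c) + vhi * (c + r) := by
    rw [hUbar, hαbar]; field_simp; ring
  constructor
  · constructor
    · refine ⟨Ubar, le_refl 0, le_refl 0, by norm_num, hxU, le_refl Ubar, le_refl 0,
        hUbar0.le, by ring, fun h => absurd h (by norm_num)⟩
    · rintro μe μs Ug Uh ⟨h1, h2, h3, h4, h5, h6, h7, h8, h9⟩
      have hApos := hA Ug h4
      have hBpos : 0 < (1 - δ) * (w + r) + δ * Uh := by
        have hh := mul_nonneg hδ0.le h6
        have : 0 < (1 - δ) * (w + r) := mul_pos (by linarith) (by linarith)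
        linarith
      have hT : 0 ≤ (1 - μe - μs) * δ * Uh := by
        have : 0 ≤ 1 - μe - μs := by linarith
        positivity
      have hμeA : μe * ((1 - δ) * (w - c) + δ * Ug) ≤ 0 := by
        linarith [mul_nonneg h2 hBpos.le]
      have hμsB : μs * ((1 - δ) * (w + r) + δ * Uh) ≤ 0 := by
        linarith [mul_nonneg h1 hApos.le]
      have he : μe = 0 := by
        rcases eq_or_lt_of_le h1 with h | h
        · exact h.symm
        · exfalso; nlinarith [mul_pos h hApos]
      have hs : μs = 0 := by
        rcases eq_or_lt_of_le h2 with h | h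
        · exact h.symm
        · exfalso; nlinarith [mul_pos h hBpos]
      refine ⟨he, hs, ?_⟩
      rw [he, hs] at h8
      have : δ * Uh = 0 := by linarith
      have := mul_eq_zero.mp this
      rcases this with h | h
      · exact absurd h (ne_of_gt hδ0)
      · exact h
  · constructor
    · refine ⟨hα0.le, by linarith, by linarith, hxU, le_refl Ubar, hUbar0.le, le_refl Ubar,
        by linear_combination (1 - δ) * hUbar, fun _ => le_of_eq hIC0.symm⟩
    · rintro μe μs Ug Uh ⟨h1, h2, h3, h4, h5, h6, h7, h8, h9⟩
      have hsum : 0 < μe + μs := by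
        by_contra hcon
        push_neg at hcon
        have he0 : μe = 0 := le_antisymm (by linarith) h1
        have hs0 : μs = 0 := le_antisymm (by linarith) h2
        rw [he0, hs0] at h8
        nlinarith
      have hIC := h9 hsum
      have key : (vhi - vlo) * ((μe + μs) * Ubar - (μe * (w - c) + μs * (w + r)))
          = (c + r) * (μe * vhi + μs * vlo) := by
        linear_combination (μe + μs) * hUv
      have hS : μe * (w - c) + μs * (w + r) ≤ (μe + μs) * Ubar := by
        have hh : (vhi - vlo) * (μe * (w - c) + μs * (w + r))
            ≤ (vhi - vlo) * ((μe + μs) * Ubar) := by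
          linarith [key, mul_nonneg hcr.le hIC]
        exact le_of_mul_le_mul_left hh hvd
      have hS2 : μe * (w - c) + μs * (w + r) ≤ Ubar := by
        linarith [hS, mul_nonneg (show (0:ℝ) ≤ 1 - (μe + μs) by linarith) hUbar0.le]
      have hμe1 : μe ≤ 1 := by linarith
      have hT : μe * Ug + (1 - μe) * Uh ≤ Ubar := by
        linarith [mul_le_mul_of_nonneg_left h5 h1,
          mul_le_mul_of_nonneg_left h7 (show (0:ℝ) ≤ 1 - μe by linarith)]
      have E1 : Ubar = (1 - δ) * (μe * (w - c) + μs * (w + r))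
          + δ * (μe * Ug + (1 - μe) * Uh) := by linear_combination h8
      have h1δ : δ * (μe * Ug + (1 - μe) * Uh) ≤ δ * Ubar :=
        mul_le_mul_of_nonneg_left hT hδ0.le
      have hS2' : (1 - δ) * (μe * (w - c) + μs * (w + r)) ≤ (1 - δ) * Ubar :=
        mul_le_mul_of_nonneg_left hS2 (by linarith)
      have hSd : (1 - δ) * (μe * (w - c) + μs * (w + r)) = (1 - δ) * Ubar := by
        linarith
      have hSeq : μe * (w - c) + μs * (w + r) = Ubar :=
        mul_left_cancel₀ (by linarith : (1:ℝ) - δ ≠ 0) hSd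
      have hTd : δ * (μe * Ug + (1 - μe) * Uh) = δ * Ubar := by linarith
      have hTeq : μe * Ug + (1 - μe) * Uh = Ubar :=
        mul_left_cancel₀ (ne_of_gt hδ0) hTd
      -- μe + μs = 1
      have hsum1 : μe + μs = 1 := by
        have hle : (μe + μs) * Ubar ≤ 1 * Ubar := by
          linarith [mul_nonneg (show (0:ℝ) ≤ 1 - (μe + μs) by linarith) hUbar0.le]
        have hge : Ubar ≤ (μe + μs) * Ubar := by linarith [hS, hSeq]
        have : (μe + μs) * Ubar = 1 * Ubar := by linarith
        exact mul_right_cancel₀ (ne_of_gt hUbar0) this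
      have hICeq : (c + r) * (μe * vhi + μs * vlo) = 0 := by
        linear_combination -key + (vhi - vlo) * Ubar * hsum1 - (vhi - vlo) * hSeq
      have hIC0' : μe * vhi + μs * vlo = 0 := by
        rcases mul_eq_zero.mp hICeq with h | h
        · exact absurd h (ne_of_gt hcr)
        · exact h
      have hμe : μe = αbar := by
        have h1' : μe * (vhi - vlo) = αbar * (vhi - vlo) := by
          rw [hαv]; linear_combination hIC0' - vlo * hsum1
        exact mul_right_cancel₀ (ne_of_gt hvd) h1'
      have hμs : μs = 1 - αbar := by linarith [hμe, hsum1]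
      refine ⟨hμe, hμs, ?_, ?_⟩
      · rw [hμe] at hTeq
        have hUhle : (1 - αbar) * Uh ≤ (1 - αbar) * Ubar :=
          mul_le_mul_of_nonneg_left h7 (by linarith)
        have : αbar * Ubar ≤ αbar * Ug := by linarith
        exact le_antisymm h5 (le_of_mul_le_mul_left this hα0)
      · rw [hμe] at hTeq
        have hUgle : αbar * Ug ≤ αbar * Ubar :=
          mul_le_mul_of_nonneg_left h5 hα0.le
        have : (1 - αbar) * Ubar ≤ (1 - αbar) * Uh := by linarith
        exact le_antisymm h7 (le_of_mul_le_mul_left this (by linarith))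
end

section
/- Assume U_bar > 0 and δ > δ_bar. Let F : ℝ → ℝ be concave and continuous on [0, U_bar], with F(0) = 0 and F ≥ 0 on [0, U_bar], and suppose F satisfies the Bellman equation. Let U ∈ (0, U_bar) be a point at which F is differentiable with derivative F'(U) ≥ 0. Then every maximizer (μ_e, μ_s, U_g, Û) at U has μ_s = 0. -/
/-- The objective of a tuple (μe, μs, Ug, Uh): the average client's promised
utility. -/
noncomputable def Obj (δ p xδ vhi vlo : ℝ) (F : ℝ → ℝ) (μe μs Ug Uh : ℝ) : ℝ :=
  μe * ((1 - δ) * vhi + δ * (p * F Ug + (1 - p) * F (Ug - xδ)))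
    + μs * (1 - δ) * vlo + (1 - μe) * δ * F Uh

/-- F satisfies the Bellman equation: at every U ∈ [0, U_bar] the feasible set is
nonempty and F(U) is the maximum of the objective over feasible tuples, attained
by some feasible tuple. -/
def Bellman (δ p w r c xδ vhi vlo Ubar : ℝ) (F : ℝ → ℝ) : Prop :=
  ∀ U ∈ Set.Icc (0 : ℝ) Ubar,
    (∃ μe μs Ug Uh, Feasible δ w r c xδ vhi vlo Ubar U μe μs Ug Uh) ∧
    (∀ μe μs Ug Uh, Feasible δ w r c xδ vhi vlo Ubar U μe μs Ug Uh →
        Obj δ p xδ vhi vlo F μe μs Ug Uh ≤ F U) ∧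
    (∃ μe μs Ug Uh, Feasible δ w r c xδ vhi vlo Ubar U μe μs Ug Uh ∧
        Obj δ p xδ vhi vlo F μe μs Ug Uh = F U)

/-- A maximizer at U: a feasible tuple attaining the maximum F(U). -/
def IsMaximizer (δ p w r c xδ vhi vlo Ubar : ℝ) (F : ℝ → ℝ)
    (U μe μs Ug Uh : ℝ) : Prop :=
  Feasible δ w r c xδ vhi vlo Ubar U μe μs Ug Uh ∧
  Obj δ p xδ vhi vlo F μe μs Ug Uh = F U

open Filter Set Topology in
/-- Supergradient inequality in slope form: for a concave function differentiable
at an interior point `U`, secant slopes from the left of `U` are at least `d`. -/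
lemma slope_ge_of_concaveOn {Ubar : ℝ} {F : ℝ → ℝ}
    (hconc : ConcaveOn ℝ (Set.Icc 0 Ubar) F)
    {U d y : ℝ} (hU : U ∈ Set.Ioo (0:ℝ) Ubar) (hd : HasDerivAt F d U)
    (hy0 : 0 ≤ y) (hyU : y < U) :
    d ≤ (F y - F U) / (y - U) := by
  rw [hasDerivAt_iff_tendsto_slope] at hd
  have hmono : 𝓝[<] U ≤ 𝓝[≠] U :=
    nhdsWithin_mono _ (fun z hz => ne_of_lt hz)
  refine le_of_tendsto (hd.mono_left hmono) ?_
  filter_upwards [Ioo_mem_nhdsLT_of_mem (Set.mem_Ioc.mpr ⟨hyU, le_refl U⟩)] with z hz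
  obtain ⟨hzy, hzU⟩ := hz
  have hUy : 0 < U - y := sub_pos.2 hyU
  set t : ℝ := (U - z) / (U - y) with ht_def
  have ht0 : 0 ≤ t := div_nonneg (by linarith) hUy.le
  have ht1 : t ≤ 1 := by rw [ht_def, div_le_one hUy]; linarith
  have htq : t * (U - y) = U - z := div_mul_cancel₀ _ (ne_of_gt hUy)
  have hpt : t • y + (1 - t) • U = z := by
    simp only [smul_eq_mul]; linear_combination -htq
  have hymem : y ∈ Set.Icc (0:ℝ) Ubar := ⟨hy0, by linarith [hU.2]⟩
  have hUmem : U ∈ Set.Icc (0:ℝ) Ubar := ⟨hU.1.le, hU.2.le⟩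
  have hconc2 := hconc.2 hymem hUmem ht0 (by linarith : (0:ℝ) ≤ 1 - t) (by ring)
  rw [hpt] at hconc2
  simp only [smul_eq_mul] at hconc2
  rw [slope_def_field]
  have hzU' : z - U < 0 := by linarith
  have hyU' : y - U < 0 := by linarith
  rw [div_le_iff_of_neg hzU']
  have h4 : z - U = t * (y - U) := by linear_combination htq
  rw [h4]
  have h5 : (F y - F U) / (y - U) * (t * (y - U)) = t * (F y - F U) := by
    field_simp [hyU'.ne]
  rw [h5]
  linarith

set_option maxHeartbeats 1000000 in
/-- where F has a nonnegative derivative, every maximizer puts zero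
probability on recommending shirking. -/
theorem stmt9 (δ p q w r g b vlo vhi c xδ αbar Ubar δbar : ℝ)
    (hδ0 : 0 < δ) (hδ1 : δ < 1)
    (hq0 : 0 < q) (hqp : q < p) (hp1 : p < 1)
    (hw : 0 < w) (hr : 0 < r)
    (hvlo : vlo = q * g + (1 - q) * b)
    (hvhi : vhi = p * g + (1 - p) * b)
    (hvlo0 : vlo < 0) (hvhi0 : 0 < vhi)
    (hc : c = (1 - p) * r / (p - q))
    (hx : xδ = (1 - δ) * r / (δ * (p - q)))
    (hαbar : αbar = -vlo / (vhi - vlo))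
    (hUbar : Ubar = αbar * (w - c) + (1 - αbar) * (w + r))
    (hδbar : δbar = r / (r + (p - q) * Ubar))
    (hUbar0 : 0 < Ubar) (hδgt : δbar < δ)
    (F : ℝ → ℝ)
    (hconc : ConcaveOn ℝ (Set.Icc 0 Ubar) F)
    (hcont : ContinuousOn F (Set.Icc 0 Ubar))
    (hF0 : F 0 = 0)
    (hFnn : ∀ U ∈ Set.Icc (0 : ℝ) Ubar, 0 ≤ F U)
    (hBell : Bellman δ p w r c xδ vhi vlo Ubar F)
    (U : ℝ) (hU : U ∈ Set.Ioo (0 : ℝ) Ubar)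
    (d : ℝ) (hd : HasDerivAt F d U) (hd0 : 0 ≤ d) :
    ∀ μe μs Ug Uh, IsMaximizer δ p w r c xδ vhi vlo Ubar F U μe μs Ug Uh →
      μs = 0 := by
  intro μe μs Ug Uh hmax
  obtain ⟨⟨h1, h2, h3, h4, h5, h6, h7, h8, h9⟩, hobj⟩ := hmax
  by_contra hne
  have hμs : 0 < μs := h2.lt_of_ne (Ne.symm hne)
  have hδ1' : 0 < 1 - δ := by linarith
  have hwr : 0 < w + r := by linarith
  have hs : 0 < (1 - δ) * (w + r) := mul_pos hδ1' hwr
  set u : ℝ := min μs (U / ((1 - δ) * (w + r))) with hu_def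
  have hu_pos : 0 < u := lt_min hμs (div_pos hU.1 hs)
  have hu_le : u ≤ μs := min_le_left _ _
  have hus : u * ((1 - δ) * (w + r)) ≤ U := by
    have hmr : u ≤ U / ((1 - δ) * (w + r)) := min_le_right _ _
    calc u * ((1 - δ) * (w + r)) ≤ (U / ((1 - δ) * (w + r))) * ((1 - δ) * (w + r)) :=
          mul_le_mul_of_nonneg_right hmr hs.le
      _ = U := div_mul_cancel₀ _ (ne_of_gt hs)
  set U' : ℝ := U - u * ((1 - δ) * (w + r)) with hU'_def
  have hU'0 : 0 ≤ U' := by rw [hU'_def]; linarith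
  have hU'ltU : U' < U := by
    have := mul_pos hu_pos hs
    rw [hU'_def]; linarith
  have hU'mem : U' ∈ Set.Icc (0:ℝ) Ubar := ⟨hU'0, by linarith [hU.2]⟩
  have hfeas' : Feasible δ w r c xδ vhi vlo Ubar U' μe (μs - u) Ug Uh := by
    refine ⟨h1, by linarith, by linarith, h4, h5, h6, h7, ?_, ?_⟩
    · rw [hU'_def]; linear_combination h8
    · intro _
      have h9' := h9 (by linarith : 0 < μe + μs)
      have hterm : 0 ≤ u * (-vlo) := mul_nonneg hu_pos.le (by linarith)
      nlinarith [h9', hterm]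
  have hub := (hBell U' hU'mem).2.1 μe (μs - u) Ug Uh hfeas'
  have hObj' : Obj δ p xδ vhi vlo F μe (μs - u) Ug Uh
      = F U - u * ((1 - δ) * vlo) := by
    unfold Obj at hobj ⊢
    linear_combination hobj
  rw [hObj'] at hub
  -- supergradient bound: F U' ≤ F U + d * (U' - U)
  have hslope : d ≤ (F U' - F U) / (U' - U) :=
    slope_ge_of_concaveOn hconc hU hd hU'0 hU'ltU
  have hneg : U' - U < 0 := by linarith
  have hsg : F U' - F U ≤ d * (U' - U) := (le_div_iff_of_neg hneg).1 hslope
  have hdm : d * (U' - U) ≤ 0 := mul_nonpos_of_nonneg_of_nonpos hd0 hneg.le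
  have hpos : 0 < u * ((1 - δ) * (-vlo)) :=
    mul_pos hu_pos (mul_pos hδ1' (neg_pos.2 hvlo0))
  nlinarith [hub, hsg, hdm, hpos]
end

section
/- Assume U_bar > 0 and δ > δ_bar. Let F : ℝ → ℝ be concave and continuous on [0, U_bar], with F(0) = 0 and F ≥ 0 on [0, U_bar], and suppose F satisfies the Bellman equation. Then F is affine on [U^R, U_bar]: there exist real a, m such that F(U) = a + m·U for all U ∈ [U^R, U_bar]. -/
set_option maxHeartbeats 2000000 in
/-- F is affine on [U^R, U_bar]. -/
theorem stmt12 (δ p q w r g b vlo vhi c xδ αbar Ubar δbar UR : ℝ)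
    (hδ0 : 0 < δ) (hδ1 : δ < 1)
    (hq0 : 0 < q) (hqp : q < p) (hp1 : p < 1)
    (hw : 0 < w) (hr : 0 < r)
    (hvlo : vlo = q * g + (1 - q) * b)
    (hvhi : vhi = p * g + (1 - p) * b)
    (hvlo0 : vlo < 0) (hvhi0 : 0 < vhi)
    (hc : c = (1 - p) * r / (p - q))
    (hx : xδ = (1 - δ) * r / (δ * (p - q)))
    (hαbar : αbar = -vlo / (vhi - vlo))
    (hUbar : Ubar = αbar * (w - c) + (1 - αbar) * (w + r))
    (hδbar : δbar = r / (r + (p - q) * Ubar))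
    (hUR : UR = (1 - δ) * (w - c) + δ * Ubar)
    (hUbar0 : 0 < Ubar) (hδgt : δbar < δ)
    (F : ℝ → ℝ)
    (hconc : ConcaveOn ℝ (Set.Icc 0 Ubar) F)
    (hcont : ContinuousOn F (Set.Icc 0 Ubar))
    (hF0 : F 0 = 0)
    (hFnn : ∀ U ∈ Set.Icc (0 : ℝ) Ubar, 0 ≤ F U)
    (hBell : Bellman δ p w r c xδ vhi vlo Ubar F) :
    ∃ a m : ℝ, ∀ U ∈ Set.Icc UR Ubar, F U = a + m * U := by
  -- ### basic positivity facts
  have hpq : 0 < p - q := sub_pos.2 hqp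
  have hp0 : 0 < p := hq0.trans hqp
  have h1p : 0 < 1 - p := sub_pos.2 hp1
  have h1q : 0 < 1 - q := by linarith
  have h1d : 0 < 1 - δ := sub_pos.2 hδ1
  have hβ : 0 < -vlo := by linarith
  have hvv : 0 < vhi - vlo := by linarith
  have hα_lo : αbar * (vhi - vlo) = -vlo := by
    rw [hαbar]; exact div_mul_cancel₀ _ hvv.ne'
  have hα0 : 0 < αbar := by rw [hαbar]; exact div_pos hβ hvv
  have hα1 : αbar < 1 := by
    have h' : αbar * (vhi - vlo) < 1 * (vhi - vlo) := by rw [hα_lo]; linarith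
    exact lt_of_mul_lt_mul_right h' hvv.le
  have h1α : 0 < 1 - αbar := sub_pos.2 hα1
  have hα_hi : (1 - αbar) * (vhi - vlo) = vhi := by linear_combination -hα_lo
  have hc0 : 0 < c := by rw [hc]; exact div_pos (mul_pos h1p hr) hpq
  have hc' : c * (p - q) = (1 - p) * r := by rw [hc]; field_simp
  have hrc : 0 < r + c := by linarith
  have hx0 : 0 < xδ := by rw [hx]; exact div_pos (mul_pos h1d hr) (mul_pos hδ0 hpq)
  have hx' : xδ * (δ * (p - q)) = (1 - δ) * r := by rw [hx]; field_simp
  have hrpqU : 0 < r + (p - q) * Ubar := by positivity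
  have hδr : (1 - δ) * r < δ * ((p - q) * Ubar) := by
    rw [hδbar, div_lt_iff₀ hrpqU] at hδgt
    have e : δ * (r + (p - q) * Ubar) = δ * r + δ * ((p - q) * Ubar) := by ring
    linarith
  have hxUb : xδ < Ubar := by
    by_contra hcon
    push_neg at hcon
    have e1 := mul_le_mul_of_nonneg_right hcon (mul_pos hδ0 hpq).le
    rw [hx'] at e1
    have e2 : Ubar * (δ * (p - q)) = δ * ((p - q) * Ubar) := by ring
    linarith
  have hUbw : Ubar - (w - c) = (1 - αbar) * (r + c) := by linear_combination hUbar
  have hUbs : w + r - Ubar = αbar * (r + c) := by linear_combination -hUbar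
  have hUbUR : Ubar - UR = (1 - δ) * ((1 - αbar) * (r + c)) := by
    rw [hUR]; linear_combination (1 - δ) * hUbw
  have hURUb : UR < Ubar := by linarith [hUbUR, mul_pos h1d (mul_pos h1α hrc)]
  have hδUc : (1 - δ) * c < δ * Ubar := by
    by_contra hcon
    push_neg at hcon
    have e1 := mul_le_mul_of_nonneg_right hcon hpq.le
    have e2 : (1 - δ) * c * (p - q) = (1 - δ) * ((1 - p) * r) := by
      linear_combination (1 - δ) * hc'
    have e3 : δ * Ubar * (p - q) = δ * ((p - q) * Ubar) := by ring
    have e4 : 0 ≤ (1 - δ) * p * r := by positivity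
    have e5 : (1 - δ) * ((1 - p) * r) = (1 - δ) * r - (1 - δ) * p * r := by ring
    linarith
  have hUR0 : 0 < UR := by
    rw [hUR]
    have e : (1 - δ) * (w - c) = (1 - δ) * w - (1 - δ) * c := by ring
    linarith [hδUc, mul_pos h1d hw]
  have hrc_pq : (r + c) * (p - q) = r * (1 - q) := by linear_combination hc'
  have hdq1 : δ * (1 - αbar) * (1 - q) ≤ 1 := by
    have a1 : δ * (1 - αbar) ≤ 1 :=
      mul_le_one₀ hδ1.le (by linarith) (by linarith)
    exact mul_le_one₀ a1 (by linarith) (by linarith)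
  have hUbxUR : Ubar - xδ ≤ UR := by
    by_contra hcon
    push_neg at hcon
    have h5 : xδ * (δ * (p - q)) < ((1 - δ) * ((1 - αbar) * (r + c))) * (δ * (p - q)) := by
      apply mul_lt_mul_of_pos_right _ (mul_pos hδ0 hpq)
      linarith [hUbUR]
    have e6 : ((1 - δ) * ((1 - αbar) * (r + c))) * (δ * (p - q))
        = (δ * (1 - αbar) * (1 - q)) * ((1 - δ) * r) := by
      linear_combination ((1 - δ) * δ * (1 - αbar)) * hrc_pq
    have e7 := mul_le_mul_of_nonneg_right hdq1 (mul_pos h1d hr).le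
    rw [hx'] at h5
    rw [e6] at h5
    linarith
  have hUbmem : Ubar ∈ Set.Icc (0:ℝ) Ubar := ⟨hUbar0.le, le_refl _⟩
  have h0mem : (0:ℝ) ∈ Set.Icc (0:ℝ) Ubar := ⟨le_refl _, hUbar0.le⟩
  have hURmem : UR ∈ Set.Icc (0:ℝ) Ubar := ⟨hUR0.le, hURUb.le⟩
  have hUbxmem : Ubar - xδ ∈ Set.Icc (0:ℝ) Ubar := ⟨by linarith, by linarith⟩
  -- ### abbreviations
  set M : ℝ := F Ubar with hM_def
  set N : ℝ := F (Ubar - xδ) with hN_def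
  set KR : ℝ := F UR with hKR_def
  set K : ℝ := (1 - δ) * vhi + δ * (p * M + (1 - p) * N) with hK_def
  set mc : ℝ := (M - KR) / (Ubar - UR) with hmc_def
  set aC : ℝ := KR - mc * UR with haC_def
  set nn : ℝ := (M - N) / xδ with hnn_def
  have hmc' : mc * (Ubar - UR) = M - KR := by
    rw [hmc_def]; exact div_mul_cancel₀ _ (by linarith : Ubar - UR ≠ 0)
  have hnn' : nn * xδ = M - N := by
    rw [hnn_def]; exact div_mul_cancel₀ _ hx0.ne'
  have hneUR : Ubar - UR ≠ 0 := by linarith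
  clear_value M N KR K mc aC nn
  -- ### the IC consequence helper
  have hICnn : ∀ μe μs : ℝ, 0 ≤ μe → 0 ≤ μs →
      (0 < μe + μs → 0 ≤ μe * vhi + μs * vlo) → 0 ≤ μe * vhi + μs * vlo := by
    intro μe μs h1 h2 h9
    rcases eq_or_lt_of_le (add_nonneg h1 h2) with he | hlt
    · have hμe : μe = 0 := by linarith
      have hμs : μs = 0 := by linarith
      rw [hμe, hμs]; ring_nf; exact le_refl 0
    · exact h9 hlt
  -- ### Bellman equation at Ubar : unique feasible tuple, giving E1
  have hE1 : αbar * ((1 - δ) * vhi + δ * (p * M + (1 - p) * N))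
      + (1 - αbar) * (1 - δ) * vlo + (1 - αbar) * δ * M = M := by
    obtain ⟨μe, μs, Ug, Uh, hf, hobj⟩ := (hBell Ubar hUbmem).2.2
    obtain ⟨h1, h2, h3, h4, h5, h6, h7, h8, h9⟩ := hf
    have hIC := hICnn μe μs h1 h2 h9
    have h1e : μe ≤ 1 := by linarith
    -- the S-identity
    have hSid : (vhi - vlo) * (Ubar - (μe * (w - c) + μs * (w + r)))
        = Ubar * (1 - μe - μs) * (vhi - vlo) + (r + c) * (μe * vhi + μs * vlo) := by
      linear_combination (μe * (vhi - vlo)) * hUbw - (μs * (vhi - vlo)) * hUbs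
        + (μe * (r + c)) * hα_hi - (μs * (r + c)) * hα_lo
    -- PK rearranged
    have hPK : Ubar = (1 - δ) * (μe * (w - c) + μs * (w + r))
        + δ * (μe * Ug + (1 - μe) * Uh) := by linear_combination h8
    have hA : μe * Ug + (1 - μe) * Uh ≤ Ubar := by
      have a1 : μe * Ug ≤ μe * Ubar := mul_le_mul_of_nonneg_left h5 h1
      have a2 : (1 - μe) * Uh ≤ (1 - μe) * Ubar :=
        mul_le_mul_of_nonneg_left h7 (by linarith)
      have a3 : μe * Ubar + (1 - μe) * Ubar = Ubar := by ring
      linarith only [a1, a2, a3]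
    have t1 : 0 ≤ Ubar * (1 - μe - μs) * (vhi - vlo) :=
      mul_nonneg (mul_nonneg hUbar0.le (by linarith)) hvv.le
    have t2 : 0 ≤ (r + c) * (μe * vhi + μs * vlo) := mul_nonneg hrc.le hIC
    have hS : μe * (w - c) + μs * (w + r) ≤ Ubar := by
      have s1 : 0 ≤ (vhi - vlo) * (Ubar - (μe * (w - c) + μs * (w + r))) := by
        linarith only [hSid, t1, t2]
      have s2 := (mul_nonneg_iff_of_pos_left hvv).mp s1
      linarith only [s2]
    have b1 : 0 ≤ (1 - δ) * (Ubar - (μe * (w - c) + μs * (w + r))) :=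
      mul_nonneg h1d.le (by linarith)
    have b2 : 0 ≤ δ * (Ubar - (μe * Ug + (1 - μe) * Uh)) :=
      mul_nonneg hδ0.le (by linarith)
    have b3 : (1 - δ) * (Ubar - (μe * (w - c) + μs * (w + r)))
        + δ * (Ubar - (μe * Ug + (1 - μe) * Uh)) = 0 := by linear_combination hPK
    have hSeq : μe * (w - c) + μs * (w + r) = Ubar := by
      have s3 : (1 - δ) * (Ubar - (μe * (w - c) + μs * (w + r))) = 0 := by
        linarith only [b1, b2, b3]
      rcases mul_eq_zero.1 s3 with h'' | h''
      · exact absurd h'' h1d.ne'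
      · linarith only [h'']
    have hAeq : μe * Ug + (1 - μe) * Uh = Ubar := by
      have s3 : δ * (Ubar - (μe * Ug + (1 - μe) * Uh)) = 0 := by
        linarith only [b1, b2, b3]
      rcases mul_eq_zero.1 s3 with h'' | h''
      · exact absurd h'' hδ0.ne'
      · linarith only [h'']
    have hzero : Ubar * (1 - μe - μs) * (vhi - vlo) + (r + c) * (μe * vhi + μs * vlo) = 0 := by
      rw [hSeq] at hSid; linarith [hSid]
    have t1 : 0 ≤ Ubar * (1 - μe - μs) * (vhi - vlo) :=
      mul_nonneg (mul_nonneg hUbar0.le (by linarith)) hvv.le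
    have t2 : 0 ≤ (r + c) * (μe * vhi + μs * vlo) := mul_nonneg hrc.le hIC
    have hsum1 : μe + μs = 1 := by
      have : Ubar * (1 - μe - μs) * (vhi - vlo) = 0 := by linarith
      have h' : Ubar * (vhi - vlo) * (1 - μe - μs) = 0 := by
        linear_combination this
      rcases mul_eq_zero.1 h' with h'' | h''
      · exact absurd h'' (mul_pos hUbar0 hvv).ne'
      · linarith only [h'']
    have hICeq : μe * vhi + μs * vlo = 0 := by
      have : (r + c) * (μe * vhi + μs * vlo) = 0 := by linarith
      rcases mul_eq_zero.1 this with h'' | h''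
      · exact absurd h'' hrc.ne'
      · exact h''
    have hμe : μe = αbar := by
      have e1 : μe * (vhi - vlo) = αbar * (vhi - vlo) := by
        rw [hα_lo]
        have : μs = 1 - μe := by linarith
        rw [this] at hICeq; linarith [hICeq]
      exact mul_right_cancel₀ hvv.ne' e1
    have hμs : μs = 1 - αbar := by linarith [hμe]
    have hUg : Ug = Ubar := by
      have k1 : 0 ≤ μe * (Ubar - Ug) := mul_nonneg h1 (by linarith)
      have k2 : 0 ≤ (1 - μe) * (Ubar - Uh) := mul_nonneg (by linarith) (by linarith)
      have k3 : μe * (Ubar - Ug) + (1 - μe) * (Ubar - Uh) = 0 := by linarith [hAeq]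
      have k4 : μe * (Ubar - Ug) = 0 := by linarith
      rw [hμe] at k4
      rcases mul_eq_zero.1 k4 with h'' | h''
      · exact absurd h'' hα0.ne'
      · linarith
    have hUh : Uh = Ubar := by
      have k1 : 0 ≤ μe * (Ubar - Ug) := mul_nonneg h1 (by linarith)
      have k2 : 0 ≤ (1 - μe) * (Ubar - Uh) := mul_nonneg (by linarith) (by linarith)
      have k3 : μe * (Ubar - Ug) + (1 - μe) * (Ubar - Uh) = 0 := by linarith [hAeq]
      have k4 : (1 - μe) * (Ubar - Uh) = 0 := by linarith
      rw [hμe] at k4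
      rcases mul_eq_zero.1 k4 with h'' | h''
      · exact absurd h'' h1α.ne'
      · linarith
    rw [Obj, hμe, hμs, hUg, hUh] at hobj
    rw [← hM_def, ← hN_def] at hobj
    linear_combination hobj
  -- ### concavity helper
  have hchord : ∀ x ∈ Set.Icc (0:ℝ) Ubar, ∀ y ∈ Set.Icc (0:ℝ) Ubar, ∀ a b : ℝ,
      0 ≤ a → 0 ≤ b → a + b = 1 → a * F x + b * F y ≤ F (a * x + b * y) := by
    intro x hx y hy a b ha hb hab
    simpa using hconc.2 hx hy ha hb hab
  -- ### K ≤ F UR  (lower bound at UR via the full-effort tuple)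
  have hKKR : K ≤ KR := by
    have hfeas : Feasible δ w r c xδ vhi vlo Ubar UR 1 0 Ubar 0 := by
      refine ⟨by norm_num, le_refl 0, by norm_num, hxUb.le, le_refl _, le_refl 0,
        hUbar0.le, by rw [hUR]; ring, ?_⟩
      intro _
      have : (1:ℝ) * vhi + 0 * vlo = vhi := by ring
      linarith [hvhi0]
    have hle := (hBell UR hURmem).2.1 1 0 Ubar 0 hfeas
    rw [Obj] at hle
    rw [← hM_def, ← hN_def, ← hKR_def] at hle
    rw [hK_def]
    linarith [hle]
  -- ### 0 ≤ aC  (chord of F through 0 and UR lies above line at 0)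
  have hcc2a : UR * M ≤ KR * Ubar := by
    have hcc := hchord 0 h0mem Ubar hUbmem ((Ubar - UR)/Ubar) (UR/Ubar)
      (div_nonneg (by linarith) hUbar0.le) (div_nonneg hUR0.le hUbar0.le)
      (by rw [← add_div]; field_simp; ring)
    have harg : (Ubar - UR)/Ubar * 0 + UR/Ubar * Ubar = UR := by
      rw [mul_zero, zero_add, div_mul_cancel₀ _ hUbar0.ne']
    rw [harg, hF0, mul_zero, zero_add, ← hM_def, ← hKR_def] at hcc
    rw [div_mul_eq_mul_div, div_le_iff₀ hUbar0] at hcc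
    linarith [hcc]
  have haC0 : 0 ≤ aC := by
    have e : aC * (Ubar - UR) = KR * Ubar - M * UR := by
      rw [haC_def]; linear_combination (-UR) * hmc'
    have h0 : 0 ≤ aC * (Ubar - UR) := by rw [e]; linarith [hcc2a]
    exact (mul_nonneg_iff_of_pos_right (by linarith : (0:ℝ) < Ubar - UR)).mp h0
  -- ### mc ≤ nn  (concavity: right chord slope is smallest)
  have hnnmc : mc ≤ nn := by
    have hcc := hchord (Ubar - xδ) hUbxmem Ubar hUbmem ((Ubar - UR)/xδ)
      ((UR - (Ubar - xδ))/xδ) (div_nonneg (by linarith) hx0.le)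
      (div_nonneg (by linarith) hx0.le)
      (by rw [← add_div]; field_simp [hx0.ne']; ring)
    have harg : (Ubar - UR)/xδ * (Ubar - xδ) + (UR - (Ubar - xδ))/xδ * Ubar = UR := by
      field_simp [hx0.ne']; ring
    rw [harg, ← hN_def, ← hM_def, ← hKR_def] at hcc
    have hcc2 : (Ubar - UR) * N + (UR - (Ubar - xδ)) * M ≤ KR * xδ := by
      rw [div_mul_eq_mul_div, div_mul_eq_mul_div, ← add_div,
        div_le_iff₀ hx0] at hcc
      linarith [hcc]
    have e : (nn - mc) * (xδ * (Ubar - UR)) = (M - N) * (Ubar - UR) - (M - KR) * xδ := by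
      linear_combination (Ubar - UR) * hnn' - xδ * hmc'
    have h0 : 0 ≤ (nn - mc) * (xδ * (Ubar - UR)) := by rw [e]; linarith [hcc2]
    have := (mul_nonneg_iff_of_pos_right
      (mul_pos hx0 (by linarith : (0:ℝ) < Ubar - UR))).mp h0
    linarith
  -- ### the upper chord bound on [0, Ubar - xδ]
  have hlam : ∀ z, 0 ≤ z → z ≤ Ubar - xδ → F z ≤ N + nn * (z - (Ubar - xδ)) := by
    intro z hz0 hz1
    rcases eq_or_lt_of_le hz1 with heq | hlt
    · rw [heq]
      have : F (Ubar - xδ) = N := hN_def.symm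
      rw [this]
      simp
    · have hUz : 0 < Ubar - z := by linarith
      have hcc := hchord z ⟨hz0, by linarith⟩ Ubar hUbmem (xδ/(Ubar - z))
        ((Ubar - xδ - z)/(Ubar - z)) (div_nonneg hx0.le hUz.le)
        (div_nonneg (by linarith) hUz.le)
        (by rw [← add_div]; field_simp [hUz.ne']; ring)
      have harg : xδ/(Ubar - z) * z + (Ubar - xδ - z)/(Ubar - z) * Ubar = Ubar - xδ := by
        field_simp [hUz.ne']; ring
      rw [harg, ← hM_def, ← hN_def] at hcc
      have hcc2 : xδ * F z + (Ubar - xδ - z) * M ≤ N * (Ubar - z) := by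
        rw [div_mul_eq_mul_div, div_mul_eq_mul_div, ← add_div,
          div_le_iff₀ hUz] at hcc
        linarith [hcc]
      have e : xδ * (N + nn * (z - (Ubar - xδ))) = N * (Ubar - z) - (Ubar - xδ - z) * M := by
        linear_combination (z - (Ubar - xδ)) * hnn'
      have h0 : xδ * F z ≤ xδ * (N + nn * (z - (Ubar - xδ))) := by linarith
      exact le_of_mul_le_mul_left h0 hx0
  -- ### lower chord bound on [UR, Ubar]
  have hlow : ∀ U, UR ≤ U → U ≤ Ubar → aC + mc * U ≤ F U := by
    intro U hU1 hU2
    have hcc := hchord UR hURmem Ubar hUbmem ((Ubar - U)/(Ubar - UR))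
      ((U - UR)/(Ubar - UR)) (div_nonneg (by linarith) (by linarith))
      (div_nonneg (by linarith) (by linarith))
      (by rw [← add_div]; field_simp [hneUR]; ring)
    have harg : (Ubar - U)/(Ubar - UR) * UR + (U - UR)/(Ubar - UR) * Ubar = U := by
      field_simp [hneUR]; ring
    rw [harg, ← hKR_def, ← hM_def] at hcc
    have e : (Ubar - U)/(Ubar - UR) * KR + (U - UR)/(Ubar - UR) * M = aC + mc * U := by
      rw [haC_def, div_mul_eq_mul_div, div_mul_eq_mul_div, ← add_div,
        div_eq_iff hneUR]
      linear_combination (-(U - UR)) * hmc'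
    linarith [hcc, e]
  -- ### global upper bound  F ≤ aC + mc·x  on [0, Ubar]
  have hub : ∀ x ∈ Set.Icc (0:ℝ) Ubar, F x ≤ aC + mc * x := by
    have hgcont : ContinuousOn (fun x => F x - (aC + mc * x)) (Set.Icc 0 Ubar) :=
      hcont.sub ((continuous_const.add (continuous_const.mul continuous_id)).continuousOn)
    obtain ⟨U₀, hU₀mem, hU₀max⟩ :=
      isCompact_Icc.exists_isMaxOn (Set.nonempty_Icc.2 hUbar0.le) hgcont
    have hDle : ∀ x ∈ Set.Icc (0:ℝ) Ubar,
        F x - (aC + mc * x) ≤ F U₀ - (aC + mc * U₀) := fun x hx => hU₀max hx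
    have hD0 : F U₀ - (aC + mc * U₀) ≤ 0 := by
      by_contra hDcon
      push_neg at hDcon
      set D : ℝ := F U₀ - (aC + mc * U₀) with hD_def
      obtain ⟨μe, μs, Ug, Uh, hf, hobj⟩ := (hBell U₀ hU₀mem).2.2
      obtain ⟨h1, h2, h3, h4, h5, h6, h7, h8, h9⟩ := hf
      have hIC := hICnn μe μs h1 h2 h9
      have h1e : μe ≤ 1 := by linarith
      have hUgmem : Ug ∈ Set.Icc (0:ℝ) Ubar := ⟨le_trans hx0.le h4, h5⟩
      have hUhmem : Uh ∈ Set.Icc (0:ℝ) Ubar := ⟨h6, h7⟩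
      have e1 : F Ug ≤ aC + mc * Ug + D := by
        have := hDle Ug hUgmem; linarith
      have e3 : F Uh ≤ aC + mc * Uh + D := by
        have := hDle Uh hUhmem; linarith
      have e2 : F (Ug - xδ) ≤ N + nn * (Ug - Ubar) := by
        have h' := hlam (Ug - xδ) (by linarith) (by linarith)
        have e : Ug - xδ - (Ubar - xδ) = Ug - Ubar := by ring
        rw [e] at h'
        exact h'
      -- IC in (αbar)-coordinates
      have hμIC : 0 ≤ μe * (1 - αbar) - αbar * μs := by
        have hid : (μe * (1 - αbar) - αbar * μs) * (vhi - vlo) = μe * vhi + μs * vlo := by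
          linear_combination μe * hα_hi - μs * hα_lo
        have h0 : 0 ≤ (μe * (1 - αbar) - αbar * μs) * (vhi - vlo) := by
          rw [hid]; exact hIC
        exact (mul_nonneg_iff_of_pos_right hvv).mp h0
      -- building blocks of the certificate identity
      have hS3 : αbar * (K - M) = (1 - αbar) * ((1 - δ) * (M - vlo)) := by
        linear_combination αbar * hK_def + hE1
      have hW10 : (aC + mc * ((1 - δ) * (w - c) + δ * Ug))
          - ((1 - δ) * vhi + δ * (p * (aC + mc * Ug) + (1 - p) * (N + nn * (Ug - Ubar))))
          = (KR - K) + δ * ((1 - p) * ((nn - mc) * (Ubar - Ug))) := by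
        linear_combination (1 - δ * p) * haC_def + hK_def - mc * hUR - δ * p * hmc'
      have hV2 : αbar * (KR - K)
          + (1 - αbar) * ((1 - δ) * (aC + mc * (w + r) - vlo)) = 0 := by
        linear_combination (-1 : ℝ) * hS3 + ((1 - αbar) * (1 - δ)) * haC_def
          + ((1 - αbar) * (1 - δ) * mc) * hUbs + ((1 - αbar) * (1 - δ) + αbar) * hmc'
          - (αbar * mc) * hUbUR
      -- the certificate identity
      have hIDM : (1 - αbar) * ((aC + mc * U₀)
            - (μe * ((1 - δ) * vhi + δ * (p * (aC + mc * Ug) + (1 - p) * (N + nn * (Ug - Ubar))))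
              + μs * (1 - δ) * vlo + (1 - μe) * δ * (aC + mc * Uh)))
          = (1 - μe - μs) * ((1 - δ) * ((1 - αbar) * aC))
            + μs * (αbar * (δ * ((1 - p) * ((nn - mc) * (Ubar - Ug)))))
            + (μe * (1 - αbar) - αbar * μs)
              * ((KR - K) + δ * ((1 - p) * ((nn - mc) * (Ubar - Ug)))) := by
        linear_combination ((1 - αbar) * μe) * hW10 + μs * hV2 + ((1 - αbar) * mc) * h8
      -- nonnegativity of the right side
      have hQ : 0 ≤ δ * ((1 - p) * ((nn - mc) * (Ubar - Ug))) :=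
        mul_nonneg hδ0.le (mul_nonneg h1p.le
          (mul_nonneg (by linarith) (by linarith)))
      have hT1 : 0 ≤ (1 - μe - μs) * ((1 - δ) * ((1 - αbar) * aC)) :=
        mul_nonneg (by linarith) (mul_nonneg h1d.le (mul_nonneg h1α.le haC0))
      have hT2 : 0 ≤ μs * (αbar * (δ * ((1 - p) * ((nn - mc) * (Ubar - Ug))))) :=
        mul_nonneg h2 (mul_nonneg hα0.le hQ)
      have hT3 : 0 ≤ (μe * (1 - αbar) - αbar * μs)
          * ((KR - K) + δ * ((1 - p) * ((nn - mc) * (Ubar - Ug)))) :=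
        mul_nonneg hμIC (add_nonneg (by linarith) hQ)
      have hEA : (μe * ((1 - δ) * vhi + δ * (p * (aC + mc * Ug) + (1 - p) * (N + nn * (Ug - Ubar))))
            + μs * (1 - δ) * vlo + (1 - μe) * δ * (aC + mc * Uh)) ≤ aC + mc * U₀ := by
        have h0 : 0 ≤ (1 - αbar) * ((aC + mc * U₀)
            - (μe * ((1 - δ) * vhi + δ * (p * (aC + mc * Ug) + (1 - p) * (N + nn * (Ug - Ubar))))
              + μs * (1 - δ) * vlo + (1 - μe) * δ * (aC + mc * Uh))) := by
          rw [hIDM]; linarith [hT1, hT2, hT3]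
        have := (mul_nonneg_iff_of_pos_left h1α).mp h0
        linarith
      -- assemble the contraction step
      rw [Obj] at hobj
      have c1 : (0:ℝ) ≤ μe * (δ * p) := mul_nonneg h1 (mul_nonneg hδ0.le hp0.le)
      have c2 : (0:ℝ) ≤ μe * (δ * (1 - p)) := mul_nonneg h1 (mul_nonneg hδ0.le h1p.le)
      have c3 : (0:ℝ) ≤ (1 - μe) * δ := mul_nonneg (by linarith) hδ0.le
      have t1 := mul_le_mul_of_nonneg_left e1 c1
      have t2 := mul_le_mul_of_nonneg_left e2 c2
      have t3 := mul_le_mul_of_nonneg_left e3 c3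
      have t4 : 0 ≤ (μe * (δ * (1 - p))) * D := mul_nonneg c2 hDcon.le
      have hfinal : F U₀ ≤ (aC + mc * U₀) + δ * D := by
        linarith only [hobj, t1, t2, t3, t4, hEA]
      have hcontr : D ≤ δ * D := by linarith only [hfinal, hD_def]
      linarith only [mul_pos h1d hDcon, hcontr]
    intro x hx
    have h' := hDle x hx
    linarith
  -- ### conclusion
  refine ⟨aC, mc, fun U hU => ?_⟩
  have hup := hub U ⟨by linarith [hU.1, hUR0.le], hU.2⟩
  have hdn := hlow U hU.1 hU.2
  linarith
end

section
/- Assume w - c ≥ x_δ, and let F : ℝ → ℝ satisfy F(U') = (v_hi/w)·U' for all U' ∈ [0, w-c]. Fix U ∈ [0, w-c]. Then for every μ_e ∈ [0,1] and every U_g, U_b, Û ∈ [0, w-c] with U_g - U_b ≥ x_δ (required only when μ_e > 0) and U = μ_e·((1-δ)·w + δ·(p·U_g + (1-p)·U_b)) + (1-μ_e)·δ·Û, the value μ_e·((1-δ)·v_hi + δ·(p·F(U_g) + (1-p)·F(U_b))) + (1-μ_e)·δ·F(Û) equals (v_hi/w)·U. Moreover at least one such (μ_e, U_g, U_b, Û)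 exists. -/
/-- when w - c ≥ x_δ and F is the line (v_hi/w)·U on [0, w-c],
every feasible decomposition attains exactly the value (v_hi/w)·U, and a feasible
decomposition exists. -/
theorem stmt16 (δ p q w r g b vlo vhi c xδ : ℝ)
    (hδ0 : 0 < δ) (hδ1 : δ < 1)
    (hq0 : 0 < q) (hqp : q < p) (hp1 : p < 1)
    (hw : 0 < w) (hr : 0 < r)
    (hvlo : vlo = q * g + (1 - q) * b)
    (hvhi : vhi = p * g + (1 - p) * b)
    (hvlo0 : vlo < 0) (hvhi0 : 0 < vhi)
    (hc : c = (1 - p) * r / (p - q))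
    (hx : xδ = (1 - δ) * r / (δ * (p - q)))
    (hwc : xδ ≤ w - c)
    (F : ℝ → ℝ)
    (hF : ∀ U' ∈ Set.Icc (0 : ℝ) (w - c), F U' = (vhi / w) * U')
    (U : ℝ) (hU : U ∈ Set.Icc (0 : ℝ) (w - c)) :
    (∀ μe ∈ Set.Icc (0 : ℝ) 1, ∀ Ug ∈ Set.Icc (0 : ℝ) (w - c),
      ∀ Ub ∈ Set.Icc (0 : ℝ) (w - c), ∀ Uh ∈ Set.Icc (0 : ℝ) (w - c),
        (0 < μe → xδ ≤ Ug - Ub) →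
        U = μe * ((1 - δ) * w + δ * (p * Ug + (1 - p) * Ub)) + (1 - μe) * δ * Uh →
        μe * ((1 - δ) * vhi + δ * (p * F Ug + (1 - p) * F Ub)) + (1 - μe) * δ * F Uh
          = (vhi / w) * U) ∧
    (∃ μe ∈ Set.Icc (0 : ℝ) 1, ∃ Ug ∈ Set.Icc (0 : ℝ) (w - c),
      ∃ Ub ∈ Set.Icc (0 : ℝ) (w - c), ∃ Uh ∈ Set.Icc (0 : ℝ) (w - c),
        (0 < μe → xδ ≤ Ug - Ub) ∧
        U = μe * ((1 - δ) * w + δ * (p * Ug + (1 - p) * Ub)) + (1 - μe) * δ * Uh) := by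
  have hpq : 0 < p - q := by linarith
  have hx0 : 0 < xδ := by
    rw [hx]
    apply div_pos (by nlinarith) (by positivity)
  have hwc0 : 0 < w - c := lt_of_lt_of_le hx0 hwc
  constructor
  · intro μe hμ Ug hUg Ub hUb Uh hUh _ hsum
    rw [hF Ug hUg, hF Ub hUb, hF Uh hUh, hsum]
    have hw' : w ≠ 0 := ne_of_gt hw
    field_simp
  · refine ⟨U / (w - c), ⟨div_nonneg hU.1 hwc0.le, ?_⟩, w - c, ⟨le_of_lt hwc0, le_refl _⟩,
      w - c - xδ, ⟨by linarith, by linarith⟩, 0, ⟨le_refl _, le_of_lt hwc0⟩,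
      fun _ => by linarith, ?_⟩
    · exact div_le_one_of_le₀ hU.2 (le_of_lt hwc0)
    · have hkey : (1 - δ) * w + δ * (p * (w - c) + (1 - p) * (w - c - xδ)) = w - c := by
        have hδc : δ * (1 - p) * xδ = (1 - δ) * c := by
          rw [hx, hc]
          field_simp
        nlinarith [hδc]
      rw [hkey]
      field_simp
      ring
end
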